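/- Let m ≥ 2 be an integer and let (K_k) and (χ_k) be the rational sequences defined by K_0 = 8, χ_0 = 1, K_k = m·K_{k−1} + ((m−1)²/m)·(2m^{k+1}) + 2(m−1)·(2m^k((m−1)(k−1) − 2)) and χ_k = m·χ_{k−1} + ((m−1)(2m−1)/(12m))·(2m^{k+1}) + ((m−1)/4)·(2m^k((m−1)(k−1) − 2)) for k ≥ 1. Then χ_k > 0 for all k, and the ratio K_k / χ_k tends to 8 as k → ∞. -/

import Mathlib

open Filter

set_option maxHeartbeats 1000000 in
/-- **The slope `K²/χ` of the tower tends to `8` (Section 2).**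
For `m ≥ 2` and the sequences `K_k`, `χ_k` given by the cyclic-cover recursions with
`K₀ = 8`, `χ₀ = 1`, one has `χ_k > 0` for all `k`, and `K_k / χ_k → 8` as `k → ∞`. -/
theorem stmt_8 (m : ℕ) (hm : 2 ≤ m) (K χ : ℕ → ℚ)
    (hK0 : K 0 = 8) (hχ0 : χ 0 = 1)
    (hK : ∀ k : ℕ, K (k + 1) = (m : ℚ) * K k
        + (((m : ℚ) - 1) ^ 2 / (m : ℚ)) * (2 * (m : ℚ) ^ (k + 2))
        + 2 * ((m : ℚ) - 1) * (2 * (m : ℚ) ^ (k + 1) * (((m : ℚ) - 1) * (k : ℚ) - 2)))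
    (hχ : ∀ k : ℕ, χ (k + 1) = (m : ℚ) * χ k
        + ((((m : ℚ) - 1) * (2 * (m : ℚ) - 1)) / (12 * (m : ℚ))) * (2 * (m : ℚ) ^ (k + 2))
        + (((m : ℚ) - 1) / 4) * (2 * (m : ℚ) ^ (k + 1) * (((m : ℚ) - 1) * (k : ℚ) - 2))) :
    (∀ k : ℕ, 0 < χ k) ∧
    Tendsto (fun k : ℕ => ((K k : ℝ) / (χ k : ℝ))) atTop (nhds 8) := by
  have hmQ : (2:ℚ) ≤ (m:ℚ) := by exact_mod_cast hm
  have hm0 : (m : ℚ) ≠ 0 := by linarith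
  -- closed forms over ℚ
  have hKc : ∀ k : ℕ, K k = (m : ℚ) ^ k *
      (8 + 2 * ((m:ℚ)-1) * ((m:ℚ)-5) * k + 2 * ((m:ℚ)-1)^2 * k * ((k:ℚ)-1)) := by
    intro k
    induction k with
    | zero => simpa using hK0
    | succ n ih => rw [hK n, ih]; push_cast; field_simp; ring
  have hχc : ∀ k : ℕ, χ k = (m : ℚ) ^ k *
      ((12 + 2 * ((m:ℚ)-1) * (2*(m:ℚ)-7) * k + 3 * ((m:ℚ)-1)^2 * k * ((k:ℚ)-1)) / 12) := by
    intro k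
    induction k with
    | zero => simpa using hχ0
    | succ n ih => rw [hχ n, ih]; push_cast; field_simp; ring
  -- positivity of the quadratic factor
  have hBpos : ∀ k : ℕ,
      0 < 12 + 2 * ((m:ℚ)-1) * (2*(m:ℚ)-7) * k + 3 * ((m:ℚ)-1)^2 * (k:ℚ) * ((k:ℚ)-1) := by
    intro k
    have hk0 : (0:ℚ) ≤ (k:ℚ) := by positivity
    have hkk : (0:ℚ) ≤ (k:ℚ) * ((k:ℚ)-1) := by
      rcases Nat.eq_zero_or_pos k with h | h
      · simp [h]
      · have : (1:ℚ) ≤ (k:ℚ) := by exact_mod_cast h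
        nlinarith
    rcases le_or_gt 4 m with h4 | h4
    · have h4Q : (4:ℚ) ≤ (m:ℚ) := by exact_mod_cast h4
      nlinarith [mul_nonneg (mul_nonneg (by linarith : (0:ℚ) ≤ 2*((m:ℚ)-1))
          (by linarith : (0:ℚ) ≤ 2*(m:ℚ)-7)) hk0,
        mul_nonneg (sq_nonneg ((m:ℚ)-1)) hkk]
    · interval_cases m
      · push_cast; nlinarith [sq_nonneg ((k:ℚ) - 2), sq_nonneg ((k:ℚ) - 1)]
      · push_cast; nlinarith [sq_nonneg ((k:ℚ) - 1), sq_nonneg (k:ℚ)]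
  have hχpos : ∀ k : ℕ, 0 < χ k := by
    intro k
    rw [hχc k]
    have h1 : (0:ℚ) < (m:ℚ) ^ k := by positivity
    have := hBpos k
    positivity
  refine ⟨hχpos, ?_⟩
  -- real versions
  have hmR : (2:ℝ) ≤ (m:ℝ) := by exact_mod_cast hm
  set mr : ℝ := (m:ℝ) with hmr
  have hKr : ∀ k : ℕ, (K k : ℝ) = mr ^ k *
      (8 + 2 * (mr-1) * (mr-5) * k + 2 * (mr-1)^2 * k * ((k:ℝ)-1)) := by
    intro k; rw [hKc k]; push_cast; ring
  have hχr : ∀ k : ℕ, (χ k : ℝ) = mr ^ k *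
      ((12 + 2 * (mr-1) * (2*mr-7) * k + 3 * (mr-1)^2 * k * ((k:ℝ)-1)) / 12) := by
    intro k; rw [hχc k]; push_cast; ring
  have hBposR : ∀ k : ℕ,
      0 < 12 + 2 * (mr-1) * (2*mr-7) * k + 3 * (mr-1)^2 * (k:ℝ) * ((k:ℝ)-1) := by
    intro k
    have hk0 : (0:ℝ) ≤ (k:ℝ) := by positivity
    have hkk : (0:ℝ) ≤ (k:ℝ) * ((k:ℝ)-1) := by
      rcases Nat.eq_zero_or_pos k with h | h
      · simp [h]
      · have : (1:ℝ) ≤ (k:ℝ) := by exact_mod_cast h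
        nlinarith
    rcases le_or_gt 4 m with h4 | h4
    · have h4Q : (4:ℝ) ≤ mr := by rw [hmr]; exact_mod_cast h4
      nlinarith [mul_nonneg (mul_nonneg (by linarith : (0:ℝ) ≤ 2*(mr-1))
          (by linarith : (0:ℝ) ≤ 2*mr-7)) hk0,
        mul_nonneg (sq_nonneg (mr-1)) hkk]
    · interval_cases m <;> simp only [hmr]
      · push_cast; nlinarith [sq_nonneg ((k:ℝ) - 2), sq_nonneg ((k:ℝ) - 1)]
      · push_cast; nlinarith [sq_nonneg ((k:ℝ) - 1), sq_nonneg (k:ℝ)]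
  -- the auxiliary limit functions
  have hdiv : Tendsto (fun k : ℕ => 1 / (k:ℝ)) atTop (nhds 0) :=
    tendsto_one_div_atTop_nhds_zero_nat
  have hfA : Continuous (fun u : ℝ => 8*u^2 + 2*(mr-1)*(mr-5)*u + 2*(mr-1)^2*(1-u)) := by
    fun_prop
  have hfB : Continuous (fun u : ℝ =>
      (12*u^2 + 2*(mr-1)*(2*mr-7)*u + 3*(mr-1)^2*(1-u)) / 12) := by
    fun_prop
  have hA : Tendsto (fun k : ℕ =>
      8*(1/(k:ℝ))^2 + 2*(mr-1)*(mr-5)*(1/(k:ℝ)) + 2*(mr-1)^2*(1-1/(k:ℝ)))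
      atTop (nhds (2*(mr-1)^2)) := by
    have := (hfA.tendsto 0).comp hdiv
    simpa [Function.comp_def] using this
  have hB : Tendsto (fun k : ℕ =>
      (12*(1/(k:ℝ))^2 + 2*(mr-1)*(2*mr-7)*(1/(k:ℝ)) + 3*(mr-1)^2*(1-1/(k:ℝ))) / 12)
      atTop (nhds (3*(mr-1)^2/12)) := by
    have := (hfB.tendsto 0).comp hdiv
    simpa [Function.comp_def] using this
  have hm1 : mr - 1 ≠ 0 := by rw [hmr]; intro h; nlinarith
  have hBne : 3*(mr-1)^2/12 ≠ 0 := by positivity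
  have hlim := hA.div hB hBne
  have hval : (2*(mr-1)^2) / (3*(mr-1)^2/12) = 8 := by field_simp; ring
  rw [hval] at hlim
  refine hlim.congr' ?_
  filter_upwards [eventually_ge_atTop 1] with k hk
  have hkR : (1:ℝ) ≤ (k:ℝ) := by exact_mod_cast hk
  have hk0 : (k:ℝ) ≠ 0 := by linarith
  have hmk : mr ^ k ≠ 0 := by
    have : (0:ℝ) < mr := by rw [hmr]; linarith
    positivity
  rw [hKr k, hχr k]
  rw [mul_div_mul_left _ _ hmk]
  have hBk : (12 + 2 * (mr-1) * (2*mr-7) * k + 3 * (mr-1)^2 * (k:ℝ) * ((k:ℝ)-1)) ≠ 0 :=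
    ne_of_gt (hBposR k)
  have hk2 : ((k:ℝ))^2 ≠ 0 := pow_ne_zero _ hk0
  have e1 : 8*(1/(k:ℝ))^2 + 2*(mr-1)*(mr-5)*(1/(k:ℝ)) + 2*(mr-1)^2*(1-1/(k:ℝ))
      = (8 + 2 * (mr-1) * (mr-5) * k + 2 * (mr-1)^2 * k * ((k:ℝ)-1)) / (k:ℝ)^2 := by
    field_simp
  have e2 : (12*(1/(k:ℝ))^2 + 2*(mr-1)*(2*mr-7)*(1/(k:ℝ)) + 3*(mr-1)^2*(1-1/(k:ℝ))) / 12
      = ((12 + 2 * (mr-1) * (2*mr-7) * k + 3 * (mr-1)^2 * k * ((k:ℝ)-1)) / 12) / (k:ℝ)^2 := by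
    field_simp
  show (8*(1/(k:ℝ))^2 + 2*(mr-1)*(mr-5)*(1/(k:ℝ)) + 2*(mr-1)^2*(1-1/(k:ℝ)))
      / ((12*(1/(k:ℝ))^2 + 2*(mr-1)*(2*mr-7)*(1/(k:ℝ)) + 3*(mr-1)^2*(1-1/(k:ℝ))) / 12) = _
  rw [e1, e2, div_div_div_cancel_right₀ hk2]
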